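/- Let T be an almost ray, let l : V(T) → [0,∞) be a non-degenerate labeling, and suppose there exists an infinite subset A ⊆ V(T) that is totally bounded in the ultrametric space (V(T), d_l). Then the whole space (V(T), d_l) is totally bounded. -/

import Mathlib

open SimpleGraph

/-- `d` is an ultrametric on `V`: a metric satisfying the strong triangle inequality. -/
def IsUltrametricOn {V : Type*} (d : V → V → ℝ) : Prop :=
  (∀ x y, 0 ≤ d x y) ∧ (∀ x y, d x y = d y x) ∧
    (∀ x y, d x y = 0 ↔ x = y) ∧
    ∀ x y z, d x y ≤ max (d x z) (d z y)

/-- The vertex labeling `l` of the graph `G` is non-degenerate: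
`max {l u, l v} > 0` for every edge `{u, v}`. -/
def NondegenerateLabeling {V : Type*} (G : SimpleGraph V) (l : V → ℝ) : Prop :=
  ∀ u v, G.Adj u v → 0 < max (l u) (l v)

/-- `d` is the function `d_l` generated by the vertex labeling `l` on the tree `G`:
`d u u = 0`, and for `u ≠ v`, `d u v` is the maximum of the labels of the vertices of
the (unique) path joining `u` and `v`. -/
def IsLabelDist {V : Type*} (G : SimpleGraph V) (l : V → ℝ) (d : V → V → ℝ) : Prop :=
  (∀ u, d u u = 0) ∧
    ∀ u v : V, u ≠ v → ∀ p : G.Walk u v, p.IsPath →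
      IsGreatest (l '' {w | w ∈ p.support}) (d u v)

/-- `x` is a Cauchy sequence with respect to the distance function `d`. -/
def CauchyWith {V : Type*} (d : V → V → ℝ) (x : ℕ → V) : Prop :=
  ∀ ε : ℝ, 0 < ε → ∃ N : ℕ, ∀ m ≥ N, ∀ n ≥ N, d (x m) (x n) < ε

/-- The set `A` is totally bounded with respect to the distance function `d`:
for every `r > 0` it is covered by finitely many open balls of radius `r` centered in `A`. -/
def TotallyBoundedWith {V : Type*} (d : V → V → ℝ) (A : Set V) : Prop :=
  ∀ r : ℝ, 0 < r → ∃ s : Finset V, ↑s ⊆ A ∧ ∀ x ∈ A, ∃ c ∈ s, d c x < r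

/-- The space `V` with distance `d` is compact: every cover of `V` by open balls
(given by center–radius pairs) contains a finite subcover. -/
def CompactWith {V : Type*} (d : V → V → ℝ) : Prop :=
  ∀ F : Set (V × ℝ), (∀ x : V, ∃ p ∈ F, d p.1 x < p.2) →
    ∃ s : Finset (V × ℝ), ↑s ⊆ F ∧ ∀ x : V, ∃ p ∈ s, d p.1 x < p.2

/-- The subgraph `R` of `G` is a ray: its vertices can be enumerated as a sequence
`f 0, f 1, …` of pairwise distinct vertices, with edges exactly `{f n, f (n+1)}`. -/
def IsRaySubgraph {V : Type*} {G : SimpleGraph V} (R : G.Subgraph) : Prop :=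
  ∃ f : ℕ → V, Function.Injective f ∧ R.verts = Set.range f ∧
    ∀ x y, R.Adj x y ↔ ∃ n, (x = f n ∧ y = f (n + 1)) ∨ (x = f (n + 1) ∧ y = f n)

/-- The subgraph `T₀` of `G` is a finite subtree. -/
def IsFiniteSubtree {V : Type*} {G : SimpleGraph V} (T₀ : G.Subgraph) : Prop :=
  T₀.verts.Finite ∧ T₀.coe.IsTree

/-- The subgraph `H` of `G` is almost a ray: `H` is the union of a ray and a finite subtree. -/
def IsAlmostRaySubgraph {V : Type*} {G : SimpleGraph V} (H : G.Subgraph) : Prop :=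
  ∃ R T₀ : G.Subgraph, IsRaySubgraph R ∧ IsFiniteSubtree T₀ ∧ T₀ ⊔ R = H

/-- The graph `G` is almost a ray: `G` is the union of a ray and a finite subtree. -/
def IsAlmostRayGraph {V : Type*} (G : SimpleGraph V) : Prop :=
  ∃ R T₀ : G.Subgraph, IsRaySubgraph R ∧ IsFiniteSubtree T₀ ∧ T₀ ⊔ R = ⊤

/-- `H` is the convex hull of the vertex set `A` in `G`: a subtree containing `A`
which is a subgraph of every subtree of `G` containing `A`. -/
def IsConvexHullSubtree {V : Type*} (G : SimpleGraph V) (A : Set V) (H : G.Subgraph) : Prop :=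
  H.coe.IsTree ∧ A ⊆ H.verts ∧
    ∀ H' : G.Subgraph, H'.coe.IsTree → A ⊆ H'.verts → H ≤ H'


def rayWalk {V : Type*} {G : SimpleGraph V} {f : ℕ → V} (h : ∀ n, G.Adj (f n) (f (n+1))) :
    (n k : ℕ) → G.Walk (f n) (f (n + k))
  | _, 0 => Walk.nil
  | n, k+1 => (rayWalk h n k).append (Walk.cons (h (n+k)) Walk.nil)

theorem rayWalk_support {V : Type*} {G : SimpleGraph V} {f : ℕ → V}
    (h : ∀ n, G.Adj (f n) (f (n+1))) (n k : ℕ) :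
    (rayWalk h n k).support = (List.range' n (k+1)).map f := by
  induction k with
  | zero => simp [rayWalk]
  | succ k ih =>
    have hr : List.range' n (k+1+1) = List.range' n (k+1) ++ [n+(k+1)] := by
      simpa using List.range'_concat (step := 1) (s := n) (n := k+1)
    rw [rayWalk, Walk.support_append, ih, hr]
    simp [Nat.add_assoc]

theorem rayWalk_isPath {V : Type*} {G : SimpleGraph V} {f : ℕ → V} (hf : Function.Injective f)
    (h : ∀ n, G.Adj (f n) (f (n+1))) (n k : ℕ) :
    (rayWalk h n k).IsPath := by
  rw [Walk.isPath_def, rayWalk_support]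
  exact List.Nodup.map hf (List.nodup_range' (s := n) (n := k+1))

section aux
variable {V : Type*} {G : SimpleGraph V} {l : V → ℝ} {d : V → V → ℝ}

theorem dist_nonneg' (hG : G.Connected) (hl : ∀ w, 0 ≤ l w) (hd : IsLabelDist G l d)
    (u v : V) : 0 ≤ d u v := by
  classical
  by_cases h : u = v
  · subst h; rw [hd.1]
  · obtain ⟨p⟩ := hG.preconnected u v
    obtain ⟨x, -, hx⟩ := (hd.2 u v h p.toPath p.toPath.2).1
    rw [← hx]; exact hl x

theorem dist_symm' (hG : G.Connected) (hd : IsLabelDist G l d) (u v : V) :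
    d u v = d v u := by
  classical
  by_cases h : u = v
  · subst h; rfl
  · obtain ⟨p⟩ := hG.preconnected u v
    have h1 := hd.2 u v h p.toPath p.toPath.2
    have h2 := hd.2 v u (Ne.symm h) p.toPath.1.reverse (p.toPath.2.reverse)
    have heq : (l '' {w | w ∈ (p.toPath.1.reverse).support}) =
        (l '' {w | w ∈ p.toPath.1.support}) := by
      congr 1; ext x; simp [Walk.support_reverse]
    rw [heq] at h2
    exact h1.unique h2

theorem dist_ultra (hG : G.Connected) (hl : ∀ w, 0 ≤ l w) (hd : IsLabelDist G l d)
    (u v w : V) : d u v ≤ max (d u w) (d w v) := by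
  classical
  by_cases huv : u = v
  · subst huv; rw [hd.1]
    exact le_max_of_le_left (dist_nonneg' hG hl hd u w)
  by_cases huw : u = w
  · subst huw; exact le_max_right _ _
  by_cases hwv : w = v
  · subst hwv; exact le_max_left _ _
  obtain ⟨p1⟩ := hG.preconnected u w
  obtain ⟨p2⟩ := hG.preconnected w v
  set q := ((p1.toPath.1.append p2.toPath.1)).bypass with hq
  have hqp : q.IsPath := Walk.bypass_isPath _
  obtain ⟨x, hx, hdx⟩ := (hd.2 u v huv q hqp).1
  have hx' : x ∈ (p1.toPath.1.append p2.toPath.1).support := Walk.support_bypass_subset _ hx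
  rw [Walk.mem_support_append_iff] at hx'
  rcases hx' with hx' | hx'
  · exact le_max_of_le_left (hdx ▸ (hd.2 u w huw p1.toPath p1.toPath.2).2 ⟨x, hx', rfl⟩)
  · exact le_max_of_le_right (hdx ▸ (hd.2 w v hwv p2.toPath p2.toPath.2).2 ⟨x, hx', rfl⟩)

end aux


/-- Let `T` be an almost ray, `l` a non-degenerate labeling and suppose
there is an infinite subset `A ⊆ V(T)` totally bounded in `(V(T), d_l)`. Then the whole
space `(V(T), d_l)` is totally bounded. -/
theorem stmt16 {V : Type*} (G : SimpleGraph V) (hG : G.IsTree)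
    (hAR : IsAlmostRayGraph G)
    (l : V → ℝ) (hl : ∀ w, 0 ≤ l w) (hnd : NondegenerateLabeling G l)
    (d : V → V → ℝ) (hd : IsLabelDist G l d)
    (A : Set V) (hA : A.Infinite) (htbA : TotallyBoundedWith d A) :
    TotallyBoundedWith d Set.univ := by
  classical
  obtain ⟨R, T₀, ⟨f, hfInj, hverts, hadjR⟩, ⟨hT0fin, -⟩, hsup⟩ := hAR
  have hconn : G.Connected := hG.1
  have hadjG : ∀ n, G.Adj (f n) (f (n+1)) :=
    fun n => R.adj_sub ((hadjR _ _).mpr ⟨n, Or.inl ⟨rfl, rfl⟩⟩)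
  have hUniv : ∀ v : V, v ∈ T₀.verts ∨ ∃ n, v = f n := by
    intro v
    have hv : v ∈ (T₀ ⊔ R).verts := by rw [hsup, Subgraph.verts_top]; trivial
    rw [Subgraph.verts_sup] at hv
    rcases hv with hv | hv
    · exact Or.inl hv
    · rw [hverts] at hv; obtain ⟨n, hn⟩ := hv; exact Or.inr ⟨n, hn.symm⟩
  intro r hr
  obtain ⟨s, hsA, hs⟩ := htbA r hr
  have hSinf : {n | f n ∈ A}.Infinite := by
    have h1 : (A ∩ Set.range f).Infinite := by
      refine (hA.diff hT0fin).mono ?_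
      rintro x ⟨hx1, hx2⟩
      refine ⟨hx1, ?_⟩
      rcases hUniv x with h | ⟨n, hn⟩
      · exact absurd h hx2
      · exact ⟨n, hn.symm⟩
    exact (h1.preimage Set.inter_subset_right).mono (fun n hn => hn.1)
  haveI : Infinite {n // f n ∈ A} := hSinf.to_subtype
  have hchoice : ∀ n : {n // f n ∈ A}, ∃ c, c ∈ s ∧ d c (f n.1) < r := fun n => hs (f n.1) n.2
  choose g hg1 hg2 using hchoice
  obtain ⟨c, hcfib⟩ := Finite.exists_infinite_fiber
    (fun n : {n // f n ∈ A} => (⟨g n, hg1 n⟩ : {x // x ∈ s}))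
  set M : Set ℕ := {n | f n ∈ A ∧ d c.1 (f n) < r} with hM
  have hMinf : M.Infinite := by
    have hfib : ((fun n : {n // f n ∈ A} => (⟨g n, hg1 n⟩ : {x // x ∈ s})) ⁻¹' {c}).Infinite :=
      Set.infinite_coe_iff.mp hcfib
    have himg := hfib.image (Set.injOn_of_injective Subtype.val_injective)
    refine himg.mono ?_
    rintro n ⟨x, hx, rfl⟩
    have hgc : g x = c.1 := congrArg Subtype.val hx
    exact ⟨x.2, hgc ▸ hg2 x⟩
  obtain ⟨n0, hn0⟩ := hMinf.nonempty
  have key : ∀ i, n0 ≤ i → d (f n0) (f i) < r := by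
    intro i hi
    rcases eq_or_lt_of_le hi with rfl | hi'
    · rw [hd.1]; exact hr
    obtain ⟨m, hmM, him⟩ := hMinf.exists_gt i
    have hn0m : n0 < m := lt_trans hi' him
    have hdm : d (f n0) (f m) < r := by
      have h1 := dist_ultra hconn hl hd (f n0) (f m) c.1
      have h2 : d (f n0) c.1 = d c.1 (f n0) := dist_symm' hconn hd _ _
      calc d (f n0) (f m) ≤ max (d (f n0) c.1) (d c.1 (f m)) := h1
        _ < r := max_lt (h2 ▸ hn0.2) hmM.2
    obtain ⟨k, rfl⟩ := Nat.exists_eq_add_of_le (le_of_lt hn0m)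
    have hne : f n0 ≠ f (n0 + k) := fun hEq => (Nat.ne_of_lt hn0m) (hfInj hEq)
    have hgrm := hd.2 _ _ hne (rayWalk hadjG n0 k) (rayWalk_isPath hfInj hadjG n0 k)
    have hlab : ∀ j, n0 ≤ j → j ≤ n0 + k → l (f j) ≤ d (f n0) (f (n0+k)) := by
      intro j h1 h2
      refine hgrm.2 ⟨f j, ?_, rfl⟩
      show f j ∈ (rayWalk hadjG n0 k).support
      rw [rayWalk_support]
      exact List.mem_map_of_mem (f := f) (List.mem_range'_1.mpr ⟨h1, by omega⟩)
    obtain ⟨k', hk'⟩ := Nat.exists_eq_add_of_le hi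
    have hnei : f n0 ≠ f i := fun hEq => (Nat.ne_of_lt hi') (hfInj hEq)
    subst hk'
    have hgri := hd.2 _ _ hnei (rayWalk hadjG n0 k') (rayWalk_isPath hfInj hadjG n0 k')
    obtain ⟨x, hx, hdx⟩ := hgri.1
    have hx2 : x ∈ (rayWalk hadjG n0 k').support := hx
    rw [rayWalk_support] at hx2
    obtain ⟨j, hj, rfl⟩ := List.mem_map.mp hx2
    have hj' := List.mem_range'_1.mp hj
    have : l (f j) ≤ d (f n0) (f (n0+k)) := hlab j hj'.1 (by omega)
    rw [← hdx]
    exact lt_of_le_of_lt this hdm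
  refine ⟨s ∪ hT0fin.toFinset ∪ (Finset.range (n0+1)).image f, fun x _ => trivial, ?_⟩
  intro x _
  rcases hUniv x with hx | ⟨i, rfl⟩
  · refine ⟨x, ?_, by rw [hd.1]; exact hr⟩
    simp [Finset.mem_union, hT0fin.mem_toFinset, hx]
  · by_cases hle : i ≤ n0
    · refine ⟨f i, ?_, by rw [hd.1]; exact hr⟩
      simp only [Finset.mem_union, Finset.mem_image, Finset.mem_range]
      exact Or.inr ⟨i, by omega, rfl⟩
    · refine ⟨f n0, ?_, key i (le_of_lt (not_le.mp hle))⟩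
      simp only [Finset.mem_union, Finset.mem_image, Finset.mem_range]
      exact Or.inr ⟨n0, by omega, rfl⟩
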